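/- For every Boolean algebra B, 𝔲 ≤ 𝔲(ωB/Fin); moreover, if B is complete, atomless, and c.c.c., then 𝔲(ωB/Fin) = 𝔲(B). -/

import Mathlib

/-- A relational system `⟨A₋, A, A₊⟩`. -/
structure RelSys : Type 1 where
  Dom : Type
  Cod : Type
  Rel : Dom → Cod → Prop

/-- The dominating number `𝔡(A)` of a relational system. -/
noncomputable def dNum (S : RelSys) : Cardinal :=
  sInf { c | ∃ Y : Set S.Cod, Cardinal.mk Y = c ∧ ∀ x : S.Dom, ∃ y ∈ Y, S.Rel x y }

/-- The bounding number `𝔟(A)` of a relational system. -/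
noncomputable def bNum (S : RelSys) : Cardinal :=
  sInf { c | ∃ X : Set S.Dom, Cardinal.mk X = c ∧ ∀ y : S.Cod, ∃ x ∈ X, ¬ S.Rel x y }

/-- A generalized Galois–Tukey connection from `S` to `T` (`S ≤_T T`). -/
def GT (S T : RelSys) : Prop :=
  ∃ (φm : S.Dom → T.Dom) (φp : T.Cod → S.Cod),
    ∀ a b, T.Rel (φm a) b → S.Rel a (φp b)

/-- Galois–Tukey equivalence. -/
def GTequiv (S T : RelSys) : Prop := GT S T ∧ GT T S

/-- The σ-version `A^σ` of a relational system. -/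
def sigmaSys (S : RelSys) : RelSys :=
  ⟨S.Dom, ℕ → S.Cod, fun a f => ∃ n, S.Rel a (f n)⟩

/-- Sequential composition `A;B` of relational systems. -/
def seqComp (S T : RelSys) : RelSys :=
  ⟨S.Dom × (S.Cod → T.Dom), S.Cod × T.Cod,
   fun p q => S.Rel p.1 q.1 ∧ T.Rel (p.2 q.1) q.2⟩

/-- An antichain in a Boolean algebra: pairwise disjoint nonzero elements. -/
def BAAntichain {α : Type} [BooleanAlgebra α] (A : Set α) : Prop :=
  (∀ a ∈ A, a ≠ ⊥) ∧ ∀ a ∈ A, ∀ b ∈ A, a ≠ b → a ⊓ b = ⊥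

/-- A maximal antichain in a Boolean algebra. -/
def MaxAC {α : Type} [BooleanAlgebra α] (A : Set α) : Prop :=
  BAAntichain A ∧ ∀ b : α, b ≠ ⊥ → ∃ a ∈ A, a ⊓ b ≠ ⊥

/-- The countable chain condition. -/
def CCC (α : Type) [BooleanAlgebra α] : Prop :=
  ∀ A : Set α, BAAntichain A → A.Countable

/-- `C` refines `A` (written `A ≤ C`): every element of `C` is below some element of `A`. -/
def Refines {α : Type} [BooleanAlgebra α] (A C : Set α) : Prop :=
  ∀ c ∈ C, ∃ a ∈ A, c ≤ a

/-- `C` almost refines `A` (written `A ≤* C`). -/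
def AlmostRefines {α : Type} [BooleanAlgebra α] (A C : Set α) : Prop :=
  ∃ F : Finset α, ↑F ⊆ A ∧ Refines ((A \ ↑F) ∪ {F.sup id}) C

/-- The set of maximal antichains of `α`. -/
def PartT (α : Type) [BooleanAlgebra α] : Type := {A : Set α // MaxAC A}

/-- The refinement relational system `Part(α)`. -/
def PartSys (α : Type) [BooleanAlgebra α] : RelSys :=
  ⟨PartT α, PartT α, fun A C => Refines A.1 C.1⟩

/-- The almost-refinement relational system `Part*(α)`. -/
def PartStar (α : Type) [BooleanAlgebra α] : RelSys :=
  ⟨PartT α, PartT α, fun A C => AlmostRefines A.1 C.1⟩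

/-- The eventual domination relational system `(ωω, ≤*, ωω)`. -/
def domSys : RelSys :=
  ⟨ℕ → ℕ, ℕ → ℕ, fun f g => ∀ᶠ n in Filter.atTop, f n ≤ g n⟩

/-- Quotients of Boolean rings are Boolean rings. -/
instance quotBooleanRing (R : Type) [BooleanRing R] (I : Ideal R) :
    BooleanRing (R ⧸ I) :=
  { (inferInstance : CommRing (R ⧸ I)) with
    isIdempotentElem := fun a => by
      obtain ⟨x, rfl⟩ := Ideal.Quotient.mk_surjective a
      unfold IsIdempotentElem
      rw [← map_mul, BooleanRing.mul_self] }

/-- The quotient of a Boolean algebra by an ideal (presented as a ring ideal of the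
associated Boolean ring), again viewed as a Boolean algebra. -/
def quotAlg (α : Type) [BooleanAlgebra α] (I : Ideal (AsBoolRing α)) : Type :=
  AsBoolAlg (AsBoolRing α ⧸ I)

noncomputable instance quotAlgBA (α : Type) [BooleanAlgebra α] (I : Ideal (AsBoolRing α)) :
    BooleanAlgebra (quotAlg α I) :=
  inferInstanceAs (BooleanAlgebra (AsBoolAlg (AsBoolRing α ⧸ I)))

/-- The quotient map from a Boolean algebra to its quotient algebra. -/
def quotCls {α : Type} [BooleanAlgebra α] (I : Ideal (AsBoolRing α)) (a : α) : quotAlg α I :=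
  toBoolAlg (Ideal.Quotient.mk I (toBoolRing a))

/-- The ideal of finite subsets of `ω`, as a ring ideal of `P(ω)`. -/
def finIdeal : Ideal (AsBoolRing (Set ℕ)) where
  carrier := {x | (ofBoolRing x : Set ℕ).Finite}
  zero_mem' := by simp [ofBoolRing_zero, Set.bot_eq_empty]
  add_mem' := by
    intro a b ha hb
    simpa [ofBoolRing_add] using ((ha.union hb).subset (Set.symmDiff_subset_union))
  smul_mem' := by
    intro c x hx
    simpa [smul_eq_mul, ofBoolRing_mul] using hx.subset (by simp [Set.inf_eq_inter])

/-- `P(ω)/fin`. -/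
def PomegaFin : Type := quotAlg (Set ℕ) finIdeal

noncomputable instance : BooleanAlgebra PomegaFin := quotAlgBA _ _

/-- The ideal `Fin` of the product algebra `ωB`: functions with finite support. -/
def finSuppIdeal (B : Type) [BooleanAlgebra B] : Ideal (AsBoolRing (ℕ → B)) where
  carrier := {x | {n | (ofBoolRing x : ℕ → B) n ≠ ⊥}.Finite}
  zero_mem' := by simp [ofBoolRing_zero]
  add_mem' := by
    intro a b ha hb
    refine ((ha.union hb).subset ?_)
    intro n hn
    simp only [ofBoolRing_add, Pi.symmDiff_apply, Set.mem_setOf_eq] at hn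
    by_contra h
    simp only [Set.mem_union, Set.mem_setOf_eq] at h
    push_neg at h
    simp [h.1, h.2] at hn
  smul_mem' := by
    intro c x hx
    refine hx.subset ?_
    intro n hn
    simp only [smul_eq_mul, ofBoolRing_mul, Pi.inf_apply, Set.mem_setOf_eq] at hn
    simp only [Set.mem_setOf_eq]
    intro h
    simp [h] at hn

/-- The reduced power `ωB/Fin` of a Boolean algebra `B`. -/
def redPow (B : Type) [BooleanAlgebra B] : Type := quotAlg (ℕ → B) (finSuppIdeal B)

noncomputable instance (B : Type) [BooleanAlgebra B] : BooleanAlgebra (redPow B) := quotAlgBA _ _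
/-- The reaping relational system of a Boolean algebra. -/
def reapSys (α : Type) [BooleanAlgebra α] : RelSys :=
  ⟨α, {r : α // r ≠ ⊥}, fun b r => r.1 ≤ b ∨ r.1 ⊓ b = ⊥⟩

/-- An ultrafilter on a Boolean algebra. -/
def IsBAUltrafilter {α : Type} [BooleanAlgebra α] (U : Set α) : Prop :=
  ⊥ ∉ U ∧ (∀ a ∈ U, ∀ b ∈ U, a ⊓ b ∈ U) ∧ (∀ a ∈ U, ∀ b, a ≤ b → b ∈ U) ∧
    ∀ a : α, a ∈ U ∨ aᶜ ∈ U

/-- A principal ultrafilter: one generated by a single element. -/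
def IsPrincipal {α : Type} [BooleanAlgebra α] (U : Set α) : Prop :=
  ∃ a : α, U = {b | a ≤ b}

/-- The ultrafilter number of a Boolean algebra: the least cofinality of `(U, ≥)`
over non-principal ultrafilters `U`. -/
noncomputable def uNum (α : Type) [BooleanAlgebra α] : Cardinal :=
  sInf { c | ∃ U : Set α, IsBAUltrafilter U ∧ ¬ IsPrincipal U ∧
    ∃ D : Set α, D ⊆ U ∧ (∀ u ∈ U, ∃ d ∈ D, d ≤ u) ∧ Cardinal.mk D = c }

namespace Stmt18Aux

open Set
open scoped symmDiff

variable {α : Type} [BooleanAlgebra α]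

section QuotGeneric

variable (I : Ideal (AsBoolRing α))

theorem quotCls_eq_iff (x y : α) :
    quotCls I x = quotCls I y ↔ toBoolRing (x ∆ y) ∈ I := by
  unfold quotCls
  change (toBoolAlg _ : AsBoolAlg (AsBoolRing α ⧸ I)) = toBoolAlg _ ↔ _
  rw [toBoolAlg_inj, Ideal.Quotient.eq, BooleanRing.sub_eq_add, ← toBoolRing_symmDiff]

theorem quotCls_inf (x y : α) : quotCls I (x ⊓ y) = quotCls I x ⊓ quotCls I y := by
  unfold quotCls
  change (toBoolAlg _ : AsBoolAlg (AsBoolRing α ⧸ I)) = toBoolAlg _ ⊓ toBoolAlg _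
  rw [toBoolRing_inf, map_mul, toBoolAlg_mul]

theorem quotCls_compl (x : α) : quotCls I xᶜ = (quotCls I x)ᶜ := by
  have hx : xᶜ = x ∆ ⊤ := (symmDiff_top x).symm
  rw [hx]
  unfold quotCls
  change (toBoolAlg _ : AsBoolAlg (AsBoolRing α ⧸ I)) = (toBoolAlg _)ᶜ
  rw [toBoolRing_symmDiff, map_add, toBoolRing_top, map_one,
    ← ofBoolAlg_inj, ofBoolAlg_compl, ofBoolAlg_toBoolAlg, ofBoolAlg_toBoolAlg, add_comm]

theorem quotCls_bot : quotCls I (⊥ : α) = ⊥ := by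
  unfold quotCls
  change (toBoolAlg _ : AsBoolAlg (AsBoolRing α ⧸ I)) = ⊥
  rw [toBoolRing_bot, map_zero, toBoolAlg_zero]

theorem quotCls_top : quotCls I (⊤ : α) = ⊤ := by
  unfold quotCls
  change (toBoolAlg _ : AsBoolAlg (AsBoolRing α ⧸ I)) = ⊤
  rw [toBoolRing_top, map_one, toBoolAlg_one]

theorem quotCls_le_iff (x y : α) :
    quotCls I x ≤ quotCls I y ↔ quotCls I (x ⊓ y) = quotCls I x := by
  rw [quotCls_inf]
  exact inf_eq_left.symm

noncomputable def qrep (v : quotAlg α I) : α :=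
  ofBoolRing (Ideal.Quotient.mk_surjective (ofBoolAlg v)).choose

theorem quotCls_qrep (v : quotAlg α I) : quotCls I (qrep I v) = v := by
  unfold quotCls qrep
  change (toBoolAlg _ : AsBoolAlg (AsBoolRing α ⧸ I)) = (v : AsBoolAlg (AsBoolRing α ⧸ I))
  rw [toBoolRing_ofBoolRing, (Ideal.Quotient.mk_surjective (ofBoolAlg v)).choose_spec]
  exact toBoolAlg_ofBoolAlg _

end QuotGeneric

section UF

variable {U : Set α} (hU : IsBAUltrafilter U)
include hU

theorem uf_top : (⊤ : α) ∈ U := by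
  rcases hU.2.2.2 ⊥ with h | h
  · exact absurd h hU.1
  · rwa [compl_bot] at h

theorem uf_upward {a b : α} (ha : a ∈ U) (hab : a ≤ b) : b ∈ U := hU.2.2.1 a ha b hab

theorem uf_inf {a b : α} (ha : a ∈ U) (hb : b ∈ U) : a ⊓ b ∈ U := hU.2.1 a ha b hb

theorem uf_not_both {a : α} (ha : a ∈ U) (hc : aᶜ ∈ U) : False := by
  have h := uf_inf hU ha hc
  rw [inf_compl_eq_bot] at h
  exact hU.1 h

theorem uf_sup {a b : α} (h : a ⊔ b ∈ U) : a ∈ U ∨ b ∈ U := by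
  by_contra hn
  push_neg at hn
  rcases hU.2.2.2 a with ha | ha
  · exact hn.1 ha
  rcases hU.2.2.2 b with hb | hb
  · exact hn.2 hb
  have h2 := uf_inf hU ha hb
  rw [← compl_sup] at h2
  exact uf_not_both hU h h2

theorem uf_finsup_not_mem {ι : Type} (t : Finset ι) (f : ι → α)
    (h : ∀ i ∈ t, f i ∉ U) : t.sup f ∉ U := by
  classical
  induction t using Finset.induction_on with
  | empty => simpa using hU.1
  | @insert a s ha ih =>
    rw [Finset.sup_insert]
    intro hmem
    rcases uf_sup hU hmem with h1 | h1
    · exact h _ (Finset.mem_insert_self _ _) h1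
    · exact ih (fun i hi => h i (Finset.mem_insert_of_mem hi)) h1

theorem uf_fininf_mem {ι : Type} (t : Finset ι) (f : ι → α)
    (h : ∀ i ∈ t, f i ∈ U) : t.inf f ∈ U := by
  classical
  induction t using Finset.induction_on with
  | empty => simpa using uf_top hU
  | @insert a s ha ih =>
    rw [Finset.inf_insert]
    exact uf_inf hU (h a (Finset.mem_insert_self a s))
      (ih fun i hi => h i (Finset.mem_insert_of_mem hi))

theorem uf_principal_of_finite_base {D : Set α} (hD : D ⊆ U)
    (hbase : ∀ u ∈ U, ∃ d ∈ D, d ≤ u) (hfin : D.Finite) : IsPrincipal U := by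
  classical
  refine ⟨hfin.toFinset.inf id, ?_⟩
  ext b
  simp only [Set.mem_setOf_eq]
  constructor
  · intro hb
    obtain ⟨d, hdD, hdb⟩ := hbase b hb
    exact le_trans (Finset.inf_le (by simpa using hdD)) hdb
  · intro hb
    exact uf_upward hU (uf_fininf_mem hU _ _ fun i hi => hD (by simpa using hi)) hb

theorem uf_nonprincipal (hatom : ∀ a : α, ¬ IsAtom a) : ¬ IsPrincipal U := by
  rintro ⟨a, rfl⟩
  have ha : a ≠ ⊥ := by
    intro h
    exact hU.1 (show a ≤ ⊥ from h.le)
  have hna := hatom a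
  rw [IsAtom] at hna
  push_neg at hna
  obtain ⟨b, hba, hbne⟩ := hna ha
  rcases hU.2.2.2 b with hb | hb
  · exact absurd (hb : a ≤ b) (not_le_of_gt hba)
  · have hbb : b ≤ ⊥ := by
      calc b = b ⊓ a := (inf_eq_left.2 hba.le).symm
        _ ≤ b ⊓ bᶜ := inf_le_inf_left b hb
        _ = ⊥ := inf_compl_eq_bot
    exact hbne (le_bot_iff.1 hbb)

end UF

theorem isLUB_inf_le {S : Set α} {s c u : α} (h : IsLUB S s)
    (hb : ∀ b ∈ S, b ⊓ c ≤ u) : s ⊓ c ≤ u := by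
  have h1 : s ≤ u ⊔ cᶜ := by
    apply h.2
    intro b hbS
    calc b = b ⊓ c ⊔ b ⊓ cᶜ := by rw [← inf_sup_left, sup_compl_eq_top, inf_top_eq]
      _ ≤ u ⊔ cᶜ := sup_le_sup (hb b hbS) inf_le_right
  have h2 : cᶜ ⊓ c = ⊥ := by rw [inf_comm, inf_compl_eq_bot]
  calc s ⊓ c ≤ (u ⊔ cᶜ) ⊓ c := inf_le_inf_right c h1
    _ = u ⊓ c ⊔ cᶜ ⊓ c := by rw [inf_sup_right]
    _ ≤ u := sup_le inf_le_left (h2 ▸ bot_le)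

section RedPow

variable {B : Type} [BooleanAlgebra B]

theorem mem_finSuppIdeal (x : AsBoolRing (ℕ → B)) :
    x ∈ finSuppIdeal B ↔ {n | (ofBoolRing x : ℕ → B) n ≠ ⊥}.Finite :=
  Iff.rfl

/-- class map into `redPow B`. -/
noncomputable def rc (x : ℕ → B) : redPow B := quotCls (finSuppIdeal B) x

/-- representative map out of `redPow B`. -/
noncomputable def rrep (v : redPow B) : ℕ → B := qrep (finSuppIdeal B) v

theorem rc_rrep (v : redPow B) : rc (rrep v) = v := quotCls_qrep _ v

theorem rc_eq_iff (x y : ℕ → B) : rc x = rc y ↔ {n | x n ≠ y n}.Finite := by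
  refine (quotCls_eq_iff (finSuppIdeal B) x y).trans ?_
  rw [mem_finSuppIdeal]
  have h : {n | (ofBoolRing (toBoolRing (x ∆ y)) : ℕ → B) n ≠ ⊥} = {n | x n ≠ y n} := by
    rw [ofBoolRing_toBoolRing]
    ext n
    simp [Pi.symmDiff_apply, symmDiff_eq_bot]
  rw [h]

theorem rc_inf (x y : ℕ → B) : rc (x ⊓ y) = rc x ⊓ rc y := quotCls_inf _ x y

theorem rc_compl (x : ℕ → B) : rc xᶜ = (rc x)ᶜ := quotCls_compl _ x

theorem rc_bot : rc (⊥ : ℕ → B) = ⊥ := quotCls_bot _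

theorem rc_top : rc (⊤ : ℕ → B) = ⊤ := quotCls_top _

theorem rc_le_iff (x y : ℕ → B) : rc x ≤ rc y ↔ {n | ¬ x n ≤ y n}.Finite := by
  have h0 : rc x ≤ rc y ↔ rc (x ⊓ y) = rc x := quotCls_le_iff _ x y
  rw [h0, rc_eq_iff]
  have h : {n | (x ⊓ y) n ≠ x n} = {n | ¬ x n ≤ y n} := by
    ext n
    simp [Pi.inf_apply, inf_eq_left]
  rw [h]

theorem rc_bot_iff (x : ℕ → B) : rc x = ⊥ ↔ {n | x n ≠ ⊥}.Finite := by
  rw [← rc_bot, rc_eq_iff]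
  exact Iff.rfl

end RedPow

section Pomega

theorem mem_finIdeal (x : AsBoolRing (Set ℕ)) :
    x ∈ finIdeal ↔ (ofBoolRing x : Set ℕ).Finite :=
  Iff.rfl

/-- class map into `PomegaFin`. -/
noncomputable def pc (A : Set ℕ) : PomegaFin := quotCls finIdeal A

/-- representative map out of `PomegaFin`. -/
noncomputable def prep (s : PomegaFin) : Set ℕ := qrep finIdeal s

theorem pc_prep (s : PomegaFin) : pc (prep s) = s := quotCls_qrep _ s

theorem pc_eq_iff (A A' : Set ℕ) : pc A = pc A' ↔ (A ∆ A').Finite := by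
  refine (quotCls_eq_iff finIdeal A A').trans ?_
  rw [mem_finIdeal, ofBoolRing_toBoolRing]

theorem pc_inf (A A' : Set ℕ) : pc (A ∩ A') = pc A ⊓ pc A' := quotCls_inf _ A A'

theorem pc_compl (A : Set ℕ) : pc Aᶜ = (pc A)ᶜ := quotCls_compl _ A

theorem pc_bot : pc (∅ : Set ℕ) = ⊥ := quotCls_bot _

theorem pc_le_iff (A A' : Set ℕ) : pc A ≤ pc A' ↔ (A \ A').Finite := by
  have h0 : pc A ≤ pc A' ↔ pc (A ⊓ A') = pc A := quotCls_le_iff _ A A'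
  rw [h0, pc_eq_iff]
  have h : (A ⊓ A') ∆ A = A \ A' := by
    ext n
    simp only [Set.mem_symmDiff, Set.inf_eq_inter, Set.mem_inter_iff, Set.mem_diff]
    tauto
  rw [h]

theorem pc_bot_iff (A : Set ℕ) : pc A = ⊥ ↔ A.Finite := by
  rw [← pc_bot, pc_eq_iff]
  have h : A ∆ (∅ : Set ℕ) = A := by
    ext n
    simp [Set.mem_symmDiff]
  rw [h]

end Pomega

section Atomless

theorem exists_split {A : Set ℕ} (hA : A.Infinite) :
    ∃ A₁ : Set ℕ, A₁ ⊆ A ∧ A₁.Infinite ∧ (A \ A₁).Infinite := by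
  have f := hA.natEmbedding
  set g : ℕ → ℕ := fun n => (f n : ℕ) with hg
  have hginj : Function.Injective g := fun a b hab => f.injective (Subtype.ext hab)
  have hgA : ∀ n, g n ∈ A := fun n => (f n).2
  refine ⟨Set.range (fun k => g (2 * k)), ?_, ?_, ?_⟩
  · rintro _ ⟨k, rfl⟩
    exact hgA _
  · exact Set.infinite_range_of_injective fun a b hab => by
      have := hginj hab
      omega
  · have hsub : Set.range (fun k => g (2 * k + 1)) ⊆ A \ Set.range (fun k => g (2 * k)) := by
      rintro _ ⟨k, rfl⟩
      refine ⟨hgA _, ?_⟩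
      rintro ⟨m, hm⟩
      have := hginj hm
      omega
    exact Set.Infinite.mono hsub
      (Set.infinite_range_of_injective fun a b hab => by
        have := hginj hab
        omega)

theorem pomega_atomless (s : PomegaFin) : ¬ IsAtom s := by
  rintro ⟨hne, hmin⟩
  set A := prep s with hA
  have hs : pc A = s := pc_prep s
  have hAinf : A.Infinite := by
    intro hfin
    exact hne (by rw [← hs, pc_bot_iff]; exact hfin)
  obtain ⟨A₁, hsub, h1, h2⟩ := exists_split hAinf
  have hle : pc A₁ ≤ pc A := by
    refine (pc_le_iff A₁ A).mpr ?_
    rw [Set.diff_eq_empty.mpr hsub]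
    exact Set.finite_empty
  have hne2 : pc A₁ ≠ pc A := by
    intro heq
    have hfin := (pc_eq_iff A₁ A).mp heq
    exact h2 (hfin.subset fun n hn => Set.mem_symmDiff.mpr (Or.inr ⟨hn.1, hn.2⟩))
  have hlt : pc A₁ < pc A := lt_of_le_of_ne hle hne2
  have := hmin (pc A₁) (hs ▸ hlt)
  rw [pc_bot_iff] at this
  exact h1 this

variable {B : Type} [BooleanAlgebra B]

theorem redpow_atomless (s : redPow B) : ¬ IsAtom s := by
  rintro ⟨hne, hmin⟩
  set x := rrep s with hx
  have hs : rc x = s := rc_rrep s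
  have hAinf : {n | x n ≠ ⊥}.Infinite := by
    intro hfin
    exact hne (by rw [← hs, rc_bot_iff]; exact hfin)
  obtain ⟨A₁, hsub, h1, h2⟩ := exists_split hAinf
  classical
  set y : ℕ → B := fun n => if n ∈ A₁ then x n else ⊥ with hy
  have hle : rc y ≤ rc x := by
    refine (rc_le_iff y x).mpr ?_
    have hempty : {n | ¬ y n ≤ x n} = ∅ := by
      ext n
      simp only [hy, Set.mem_setOf_eq, Set.mem_empty_iff_false, iff_false, not_not]
      by_cases hn : n ∈ A₁ <;> simp [hn]
    rw [hempty]
    exact Set.finite_empty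
  have hne2 : rc y ≠ rc x := by
    intro heq
    have hfin := (rc_eq_iff y x).mp heq
    refine h2 (hfin.subset ?_)
    rintro n ⟨hnA, hnA₁⟩
    simp only [Set.mem_setOf_eq, hy, if_neg hnA₁]
    intro hcontra
    exact hnA hcontra.symm
  have hlt : rc y < rc x := lt_of_le_of_ne hle hne2
  have := hmin (rc y) (hs ▸ hlt)
  rw [rc_bot_iff] at this
  refine h1 (this.subset ?_)
  intro n hn
  simp only [Set.mem_setOf_eq, hy, if_pos hn]
  exact hsub hn

end Atomless

section Exists

theorem exists_ultrafilter (α : Type) [BooleanAlgebra α] [Nontrivial α] :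
    ∃ U : Set α, IsBAUltrafilter U := by
  haveI : Nontrivial (AsBoolRing α) :=
    ⟨⟨toBoolRing ⊥, toBoolRing ⊤, by rw [Ne, toBoolRing_inj]; exact bot_ne_top⟩⟩
  obtain ⟨M, hM⟩ := Ideal.exists_maximal (AsBoolRing α)
  refine ⟨{a : α | toBoolRing a ∉ M}, ?_, ?_, ?_, ?_⟩
  · simp only [Set.mem_setOf_eq, toBoolRing_bot, not_not]
    exact M.zero_mem
  · intro a ha b hb
    simp only [Set.mem_setOf_eq, toBoolRing_inf] at *
    intro hmem
    rcases hM.isPrime.mem_or_mem hmem with h | h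
    · exact ha h
    · exact hb h
  · intro a ha b hab
    simp only [Set.mem_setOf_eq] at *
    intro hb
    have hinf : a ⊓ b = a := inf_eq_left.2 hab
    have : toBoolRing a = toBoolRing a * toBoolRing b := by
      rw [← toBoolRing_inf, hinf]
    exact ha (by rw [this]; exact Ideal.mul_mem_left M _ hb)
  · intro a
    by_contra hcon
    push_neg at hcon
    simp only [Set.mem_setOf_eq, not_not] at hcon
    obtain ⟨h1, h2⟩ := hcon
    have hc : toBoolRing aᶜ = toBoolRing a + 1 := by
      rw [← hnot_eq_compl, ← symmDiff_top a, toBoolRing_symmDiff, toBoolRing_top]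
    rw [hc] at h2
    have hsum : toBoolRing a + (toBoolRing a + 1) ∈ M := M.add_mem h1 h2
    rw [← add_assoc, BooleanRing.add_self, zero_add] at hsum
    exact hM.ne_top (M.eq_top_of_isUnit_mem hsum isUnit_one)

theorem redpow_nontrivial (B : Type) [BooleanAlgebra B] [Nontrivial B] :
    (⊥ : redPow B) ≠ ⊤ := by
  rw [← rc_bot, ← rc_top, Ne, rc_eq_iff]
  intro hfin
  have : {n : ℕ | (⊥ : ℕ → B) n ≠ (⊤ : ℕ → B) n} = Set.univ := by
    ext n
    simpa using (bot_ne_top : (⊥ : B) ≠ ⊤)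
  rw [this] at hfin
  exact Set.infinite_univ hfin

theorem pomega_nontrivial : (⊥ : PomegaFin) ≠ ⊤ := by
  have h : pc Set.univ = ⊤ := quotCls_top _
  rw [← pc_bot, ← h, Ne, pc_eq_iff]
  intro hfin
  have : (∅ : Set ℕ) ∆ Set.univ = Set.univ := by
    ext n
    simp [Set.mem_symmDiff]
  rw [this] at hfin
  exact Set.infinite_univ hfin

/-- In a complete ccc atomless Boolean algebra, for every ultrafilter `U` there is a
countable partition of unity avoiding `U`. -/
theorem exists_antichain {α : Type} [BooleanAlgebra α] [Nontrivial α]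
    (hsup : ∀ S : Set α, ∃ a : α, IsLUB S a) (hatom : ∀ a : α, ¬ IsAtom a)
    (hccc : CCC α) {U : Set α} (hU : IsBAUltrafilter U) :
    ∃ a : ℕ → α, (∀ i j, i ≠ j → a i ⊓ a j = ⊥) ∧ IsLUB (Set.range a) ⊤ ∧
      ∀ n, a n ∉ U := by
  classical
  set P : Set (Set α) := {A | (∀ x ∈ A, x ∉ U ∧ x ≠ ⊥) ∧ A.Pairwise fun x y => x ⊓ y = ⊥}
    with hP
  obtain ⟨M, hM⟩ := zorn_subset P (by
    intro c hc hchain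
    refine ⟨⋃₀ c, ⟨?_, ?_⟩, fun s hs => Set.subset_sUnion_of_mem hs⟩
    · rintro x ⟨s, hsc, hxs⟩
      exact (hc hsc).1 x hxs
    · rintro x ⟨s, hsc, hxs⟩ y ⟨t, htc, hyt⟩ hxy
      rcases hchain.total hsc htc with h | h
      · exact (hc htc).2 (h hxs) hyt hxy
      · exact (hc hsc).2 hxs (h hyt) hxy)
  have hMP : M ∈ P := hM.prop
  have hMc : M.Countable := hccc M ⟨fun x hx => (hMP.1 x hx).2,
    fun x hx y hy hxy => hMP.2 hx hy hxy⟩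
  obtain ⟨sM, hsM⟩ := hsup M
  -- maximality consequence: sup M = ⊤
  have hkey : ∀ x : α, x ≠ ⊥ → x ≤ sMᶜ → x ∈ U := by
    intro x hx hxr
    by_contra hxU
    have hins : insert x M ∈ P := by
      constructor
      · rintro y hy
        rcases Set.mem_insert_iff.1 hy with rfl | hyM
        · exact ⟨hxU, hx⟩
        · exact hMP.1 y hyM
      · refine Set.Pairwise.insert hMP.2 ?_
        intro y hyM hxy
        have hdisj : x ⊓ y = ⊥ := by
          have h1 : y ≤ sM := hsM.1 hyM
          have h2 : x ⊓ y ≤ sMᶜ ⊓ sM := inf_le_inf hxr h1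
          rw [inf_comm sMᶜ sM, inf_compl_eq_bot] at h2
          exact le_bot_iff.1 h2
        exact ⟨hdisj, by rwa [inf_comm] at hdisj⟩
    have hsub := hM.2 hins (Set.subset_insert x M)
    have hxM : x ∈ M := hsub (Set.mem_insert x M)
    have h1 : x ≤ sM := hsM.1 hxM
    have h2 : x ≤ sMᶜ ⊓ sM := le_inf hxr h1
    rw [inf_comm sMᶜ sM, inf_compl_eq_bot] at h2
    exact hx (le_bot_iff.1 h2)
  have htop : sM = ⊤ := by
    by_contra hne
    have hr : sMᶜ ≠ ⊥ := by
      intro h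
      exact hne (compl_eq_bot.1 h)
    have hna := hatom sMᶜ
    rw [IsAtom] at hna
    push_neg at hna
    obtain ⟨c, hclt, hcne⟩ := hna hr
    have h1 : c ∈ U := hkey c hcne hclt.le
    have h2 : sMᶜ \ c ∈ U := by
      refine hkey _ ?_ sdiff_le
      intro h
      rw [sdiff_eq_bot_iff] at h
      exact absurd h (not_le_of_gt hclt)
    have h3 := uf_inf hU h1 h2
    rw [inf_sdiff_self_right] at h3
    exact hU.1 h3
  -- M is infinite
  have hMinf : M.Infinite := by
    intro hfin
    have hflub : IsLUB M (hfin.toFinset.sup id) :=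
      ⟨fun b hb => Finset.le_sup (f := id) (by simpa using hb),
       fun b hb => Finset.sup_le fun i hi => hb (by simpa using hi)⟩
    have heq : hfin.toFinset.sup id = ⊤ := by
      rw [← htop]
      exact (hflub.unique hsM)
    have hnot := uf_finsup_not_mem hU hfin.toFinset id
      (fun i hi => (hMP.1 i (by simpa using hi)).1)
    rw [heq] at hnot
    exact hnot (uf_top hU)
  -- enumerate M
  have hcard : Cardinal.mk M = Cardinal.aleph0 :=
    le_antisymm hMc.le_aleph0
      (Cardinal.aleph0_le_mk_iff.mpr (Set.infinite_coe_iff.mpr hMinf))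
  have hcard2 : Cardinal.mk M = Cardinal.mk ℕ := by rw [hcard, Cardinal.mk_nat]
  obtain ⟨e⟩ := Cardinal.eq.1 hcard2
  set a : ℕ → α := fun n => ((e.symm n : M) : α) with ha
  have hrange : Set.range a = M := by
    ext b
    constructor
    · rintro ⟨n, rfl⟩
      exact (e.symm n).2
    · intro hb
      exact ⟨e ⟨b, hb⟩, by simp [ha]⟩
  refine ⟨a, ?_, ?_, ?_⟩
  · intro i j hij
    have hne : a i ≠ a j := by
      intro h
      exact hij (e.symm.injective (Subtype.ext h))
    exact hMP.2 (hrange ▸ Set.mem_range_self i) (hrange ▸ Set.mem_range_self j) hne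
  · rw [hrange, ← htop]
    exact hsM
  · intro n
    exact (hMP.1 (a n) (hrange ▸ Set.mem_range_self n)).1

end Exists

section USet

/-- The defining set of `uNum`. -/
def uSet (α : Type) [BooleanAlgebra α] : Set Cardinal :=
  { c | ∃ U : Set α, IsBAUltrafilter U ∧ ¬ IsPrincipal U ∧
    ∃ D : Set α, D ⊆ U ∧ (∀ u ∈ U, ∃ d ∈ D, d ≤ u) ∧ Cardinal.mk D = c }

theorem uNum_eq (α : Type) [BooleanAlgebra α] : uNum α = sInf (uSet α) := rfl

theorem uNum_le_uNum {α β : Type} [BooleanAlgebra α] [BooleanAlgebra β]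
    (h : ∀ c ∈ uSet β, ∃ c' ∈ uSet α, c' ≤ c) (hne : (uSet β).Nonempty) :
    uNum α ≤ uNum β := by
  rw [uNum_eq, uNum_eq]
  refine le_csInf hne ?_
  intro c hc
  obtain ⟨c', hc', hle⟩ := h c hc
  exact le_trans (csInf_le' hc') hle

theorem uSet_nonempty_of (α : Type) [BooleanAlgebra α] [Nontrivial α]
    (hatom : ∀ a : α, ¬ IsAtom a) : (uSet α).Nonempty := by
  obtain ⟨U, hU⟩ := exists_ultrafilter α
  exact ⟨Cardinal.mk U, U, hU, uf_nonprincipal hU hatom, U, subset_rfl,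
    fun u hu => ⟨u, hu, le_rfl⟩, rfl⟩

end USet

section Part1

theorem part1_core (B : Type) [BooleanAlgebra B] :
    ∀ c ∈ uSet (redPow B), ∃ c' ∈ uSet PomegaFin, c' ≤ c := by
  classical
  rintro c ⟨V, hV, hnpV, D, hDV, hDbase, rfl⟩
  set χ : Set ℕ → (ℕ → B) := fun A n => if n ∈ A then ⊤ else ⊥ with hχ
  set U : Set PomegaFin := {s | ∃ A : Set ℕ, pc A = s ∧ rc (χ A) ∈ V} with hUdef
  have hcong : ∀ A A' : Set ℕ, pc A = pc A' → (rc (χ A) ∈ V ↔ rc (χ A') ∈ V) := by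
    intro A A' h
    have hfin := (pc_eq_iff A A').mp h
    have heq : rc (χ A) = rc (χ A') := by
      refine (rc_eq_iff _ _).mpr (hfin.subset ?_)
      intro n hn
      simp only [Set.mem_setOf_eq, hχ] at hn
      by_contra hns
      rw [Set.mem_symmDiff] at hns
      push_neg at hns
      by_cases h1 : n ∈ A
      · have h2 : n ∈ A' := by tauto
        rw [if_pos h1, if_pos h2] at hn
        exact hn rfl
      · have h2 : n ∉ A' := by tauto
        rw [if_neg h1, if_neg h2] at hn
        exact hn rfl
    rw [heq]
  have memU : ∀ A : Set ℕ, (pc A ∈ U ↔ rc (χ A) ∈ V) := by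
    intro A
    constructor
    · rintro ⟨A', hA', hA'V⟩
      exact (hcong A' A hA').mp hA'V
    · intro h
      exact ⟨A, rfl, h⟩
  have hχbot : χ (∅ : Set ℕ) = ⊥ := by funext n; simp [hχ]
  have hUuf : IsBAUltrafilter U := by
    refine ⟨?_, ?_, ?_, ?_⟩
    · intro hbot
      have h2 := (memU ∅).mp (by rw [pc_bot]; exact hbot)
      rw [hχbot, rc_bot] at h2
      exact hV.1 h2
    · rintro s ⟨A, hA, hAV⟩ t ⟨A', hA', hA'V⟩
      refine ⟨A ∩ A', ?_, ?_⟩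
      · rw [pc_inf, hA, hA']
      · have hχinf : χ (A ∩ A') = χ A ⊓ χ A' := by
          funext n
          simp only [hχ, Pi.inf_apply, Set.mem_inter_iff]
          by_cases h1 : n ∈ A <;> by_cases h2 : n ∈ A' <;> simp [h1, h2]
        rw [hχinf, rc_inf]
        exact uf_inf hV hAV hA'V
    · rintro s ⟨A, hA, hAV⟩ t hst
      set A' := prep t with hA'
      have hA't : pc A' = t := pc_prep t
      have hle : pc A ≤ pc A' := by rw [hA, hA't]; exact hst
      have hfin := (pc_le_iff A A').mp hle
      have hrcle : rc (χ A) ≤ rc (χ A') := by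
        refine (rc_le_iff _ _).mpr (hfin.subset ?_)
        intro n hn
        simp only [Set.mem_setOf_eq] at hn
        constructor
        · by_contra h1
          exact hn (by simp [hχ, h1])
        · intro h2
          exact hn (by simp [hχ, h2])
      rw [← hA't]
      exact (memU A').mpr (uf_upward hV hAV hrcle)
    · intro s
      set A := prep s with hA
      have hAs : pc A = s := pc_prep s
      have hcomp : sᶜ = pc Aᶜ := by rw [pc_compl, hAs]
      have hχcompl : χ Aᶜ = (χ A)ᶜ := by
        funext n
        simp only [hχ, Pi.compl_apply, Set.mem_compl_iff]
        by_cases h1 : n ∈ A <;> simp [h1]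
      rcases hV.2.2.2 (rc (χ A)) with h | h
      · left
        rw [← hAs]
        exact (memU A).mpr h
      · right
        rw [hcomp]
        refine (memU Aᶜ).mpr ?_
        rw [hχcompl, rc_compl]
        exact h
  set D' : Set PomegaFin := (fun d => pc {n | rrep d n ≠ ⊥}) '' D with hD'
  have hD'U : D' ⊆ U := by
    rintro _ ⟨d, hd, rfl⟩
    refine (memU _).mpr ?_
    have hle : rc (rrep d) ≤ rc (χ {n | rrep d n ≠ ⊥}) := by
      refine (rc_le_iff _ _).mpr ?_
      have hempty : {n | ¬ rrep d n ≤ χ {n | rrep d n ≠ ⊥} n} = ∅ := by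
        ext n
        simp only [Set.mem_setOf_eq, hχ, Set.mem_empty_iff_false, iff_false, not_not]
        by_cases h1 : rrep d n = ⊥
        · simp [h1]
        · simp [h1]
      rw [hempty]
      exact Set.finite_empty
    refine uf_upward hV ?_ hle
    rw [rc_rrep]
    exact hDV hd
  have hD'base : ∀ u ∈ U, ∃ d' ∈ D', d' ≤ u := by
    rintro u ⟨A, hAu, hAV⟩
    obtain ⟨d, hdD, hdle⟩ := hDbase _ hAV
    refine ⟨pc {n | rrep d n ≠ ⊥}, ⟨d, hdD, rfl⟩, ?_⟩
    rw [← hAu]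
    refine (pc_le_iff _ _).mpr ?_
    have hle : rc (rrep d) ≤ rc (χ A) := by rw [rc_rrep]; exact hdle
    have hfin := (rc_le_iff _ _).mp hle
    refine hfin.subset ?_
    rintro n ⟨h1, h2⟩
    simp only [Set.mem_setOf_eq] at h1 ⊢
    rw [hχ]
    simp only [if_neg h2]
    intro hc
    exact h1 (le_bot_iff.1 hc)
  exact ⟨Cardinal.mk D',
    ⟨U, hUuf, uf_nonprincipal hUuf pomega_atomless, D', hD'U, hD'base, rfl⟩,
    Cardinal.mk_image_le⟩

end Part1

section Geq

theorem geq_core (B : Type) [BooleanAlgebra B]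
    (hsup : ∀ S : Set B, ∃ a : B, IsLUB S a) (hatom : ∀ a : B, ¬ IsAtom a) :
    ∀ c ∈ uSet (redPow B), ∃ c' ∈ uSet B, c' ≤ c := by
  classical
  rintro c ⟨V, hV, hnpV, D, hDV, hDbase, rfl⟩
  choose supf hsupf using hsup
  set F : Set B := {b | rc (fun _ => b) ∈ V} with hF
  have hFuf : IsBAUltrafilter F := by
    refine ⟨?_, ?_, ?_, ?_⟩
    · intro h
      have h1 : rc (fun _ => (⊥ : B)) ∈ V := h
      have h2 : (fun _ : ℕ => (⊥ : B)) = ⊥ := rfl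
      rw [h2, rc_bot] at h1
      exact hV.1 h1
    · intro b hb b' hb'
      show rc (fun _ => b ⊓ b') ∈ V
      have h2 : (fun _ : ℕ => b ⊓ b') = (fun _ => b) ⊓ (fun _ => b') := rfl
      rw [h2, rc_inf]
      exact uf_inf hV hb hb'
    · intro b hb b' hbb'
      show rc (fun _ => b') ∈ V
      refine uf_upward hV hb ?_
      refine (rc_le_iff _ _).mpr ?_
      have hempty : {n : ℕ | ¬ b ≤ b'} = ∅ := by ext n; simp [hbb']
      rw [hempty]
      exact Set.finite_empty
    · intro b
      rcases hV.2.2.2 (rc (fun _ => b)) with h | h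
      · left; exact h
      · right
        show rc (fun _ => bᶜ) ∈ V
        have h2 : (fun _ : ℕ => bᶜ) = (fun _ : ℕ => b)ᶜ := rfl
        rw [h2, rc_compl]
        exact h
  have hDinf : D.Infinite := by
    intro hfin
    exact hnpV (uf_principal_of_finite_base hV hDV hDbase hfin)
  set yd : D → (ℕ → B) := fun d => rrep d.1 with hyd
  set sf : D × ℕ → B := fun p => supf (yd p.1 '' Set.Ici p.2) with hsf
  set E : Set B := {b | b ∈ F ∧ ∃ p : D × ℕ, b = sf p} with hE
  have hEF : E ⊆ F := fun b hb => hb.1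
  have hbase : ∀ b ∈ F, ∃ e ∈ E, e ≤ b := by
    intro b hb
    have hbV : rc (fun _ => b) ∈ V := hb
    obtain ⟨d, hdD, hdle⟩ := hDbase _ hbV
    have hdle2 : rc (yd ⟨d, hdD⟩) ≤ rc (fun _ => b) := by
      show rc (rrep d) ≤ rc (fun _ => b)
      rw [rc_rrep]
      exact hdle
    have hG := (rc_le_iff (yd ⟨d, hdD⟩) (fun _ => b)).mp hdle2
    set m := hG.toFinset.sup id + 1 with hm
    have hGm : ∀ n, m ≤ n → yd ⟨d, hdD⟩ n ≤ b := by
      intro n hn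
      by_contra hc
      have h1 : n ∈ hG.toFinset := by simpa using hc
      have h2 := Finset.le_sup (f := id) h1
      simp only [id] at h2
      omega
    refine ⟨sf (⟨d, hdD⟩, m), ⟨?_, (⟨d, hdD⟩, m), rfl⟩, ?_⟩
    · show rc (fun _ => sf (⟨d, hdD⟩, m)) ∈ V
      have hdV : rc (yd ⟨d, hdD⟩) ∈ V := by
        show rc (rrep d) ∈ V
        rw [rc_rrep]
        exact hDV hdD
      refine uf_upward hV hdV ?_
      refine (rc_le_iff _ _).mpr ?_
      refine (Set.finite_Iio m).subset ?_
      intro n hn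
      simp only [Set.mem_setOf_eq] at hn
      rw [Set.mem_Iio]
      by_contra hnm
      push_neg at hnm
      exact hn ((hsupf _).1 ⟨n, Set.mem_Ici.mpr hnm, rfl⟩)
    · refine (hsupf _).2 ?_
      rintro _ ⟨n, hn, rfl⟩
      exact hGm n hn
  have hcard : Cardinal.mk E ≤ Cardinal.mk D := by
    have h1 : E ⊆ Set.range sf := fun b hb => hb.2.elim fun p hp => ⟨p, hp.symm⟩
    have h2 : Cardinal.mk E ≤ Cardinal.mk (Set.range sf) := Cardinal.mk_le_mk_of_subset h1
    have h3 : Cardinal.mk (Set.range sf) ≤ Cardinal.mk (↥D × ℕ) := Cardinal.mk_range_le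
    have haleph : Cardinal.aleph0 ≤ Cardinal.mk D :=
      Cardinal.aleph0_le_mk_iff.mpr (Set.infinite_coe_iff.mpr hDinf)
    have h4 : Cardinal.mk (↥D × ℕ) = Cardinal.mk D := by
      rw [Cardinal.mk_prod, Cardinal.lift_id, Cardinal.lift_id, Cardinal.mk_nat,
        Cardinal.mul_eq_max haleph le_rfl]
      exact max_eq_left haleph
    exact le_trans h2 (le_trans h3 h4.le)
  exact ⟨Cardinal.mk E, ⟨F, hFuf, uf_nonprincipal hFuf hatom, E, hEF, hbase, rfl⟩, hcard⟩

end Geq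

section Leq

theorem leq_core (B : Type) [BooleanAlgebra B] [Nontrivial B]
    (hsup : ∀ S : Set B, ∃ a : B, IsLUB S a) (hatom : ∀ a : B, ¬ IsAtom a)
    (hccc : CCC B) :
    ∀ c ∈ uSet B, ∃ c' ∈ uSet (redPow B), c' ≤ c := by
  classical
  rintro c ⟨U, hU, hnpU, D, hDU, hDbase, rfl⟩
  obtain ⟨a, hdisj, hatop, hanU⟩ := exists_antichain hsup hatom hccc hU
  choose supf hsupf using hsup
  set hh : (ℕ → B) → B := fun x => supf (Set.range fun n => a n ⊓ x n) with hhh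
  have hhLUB : ∀ x : ℕ → B, IsLUB (Set.range fun n => a n ⊓ x n) (hh x) :=
    fun x => hsupf _
  have hh_trans : ∀ x z : ℕ → B, {n | ¬ x n ≤ z n}.Finite → hh x ∈ U → hh z ∈ U := by
    intro x z hfin hx
    have hle : hh x ≤ hh z ⊔ hfin.toFinset.sup a := by
      apply (hhLUB x).2
      rintro _ ⟨n, rfl⟩
      by_cases hn : x n ≤ z n
      · exact le_sup_of_le_left (le_trans (inf_le_inf_left (a n) hn) ((hhLUB z).1 ⟨n, rfl⟩))
      · exact le_sup_of_le_right (le_trans inf_le_left (Finset.le_sup (by simpa using hn)))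
    have hmem := uf_upward hU hx hle
    rcases uf_sup hU hmem with h | h
    · exact h
    · exact absurd h (uf_finsup_not_mem hU _ _ fun i _ => hanU i)
  have hh_congr : ∀ x z : ℕ → B, rc x = rc z → (hh x ∈ U ↔ hh z ∈ U) := by
    intro x z h
    constructor
    · exact hh_trans x z (((rc_eq_iff x z).mp h).subset fun n hn heq => hn (le_of_eq heq))
    · exact hh_trans z x (((rc_eq_iff z x).mp h.symm).subset fun n hn heq => hn (le_of_eq heq))
  set V : Set (redPow B) := {v | hh (rrep v) ∈ U} with hVdef
  have memV : ∀ x : ℕ → B, (rc x ∈ V ↔ hh x ∈ U) := fun x =>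
    hh_congr (rrep (rc x)) x (rc_rrep (rc x))
  have hVuf : IsBAUltrafilter V := by
    refine ⟨?_, ?_, ?_, ?_⟩
    · intro hbot
      have h1 : rc (⊥ : ℕ → B) ∈ V := by rw [rc_bot]; exact hbot
      have h2 := (memV ⊥).mp h1
      have h3 : hh (⊥ : ℕ → B) ≤ ⊥ := by
        apply (hhLUB ⊥).2
        rintro _ ⟨n, rfl⟩
        simp
      rw [le_bot_iff.1 h3] at h2
      exact hU.1 h2
    · intro u hu v hv
      have hx : hh (rrep u) ∈ U := hu
      have hy : hh (rrep v) ∈ U := hv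
      have huv : u ⊓ v = rc (rrep u ⊓ rrep v) := by rw [rc_inf, rc_rrep, rc_rrep]
      rw [huv]
      refine (memV _).mpr ?_
      have hle : hh (rrep u) ⊓ hh (rrep v) ≤ hh (rrep u ⊓ rrep v) := by
        refine isLUB_inf_le (hhLUB (rrep u)) ?_
        rintro _ ⟨n, rfl⟩
        rw [inf_comm]
        refine isLUB_inf_le (hhLUB (rrep v)) ?_
        rintro _ ⟨m, rfl⟩
        by_cases hnm : m = n
        · subst hnm
          refine le_trans ?_ ((hhLUB (rrep u ⊓ rrep v)).1 ⟨m, rfl⟩)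
          simp only [Pi.inf_apply]
          refine le_inf (le_trans inf_le_left inf_le_left) (le_inf ?_ ?_)
          · exact le_trans inf_le_right inf_le_right
          · exact le_trans inf_le_left inf_le_right
        · have hbt : a m ⊓ a n = ⊥ := hdisj m n hnm
          calc (a m ⊓ rrep v m) ⊓ (a n ⊓ rrep u n) ≤ a m ⊓ a n :=
                inf_le_inf inf_le_left inf_le_left
            _ = ⊥ := hbt
            _ ≤ _ := bot_le
      exact uf_upward hU (uf_inf hU hx hy) hle
    · intro u hu w huw
      have hx : hh (rrep u) ∈ U := hu
      have hle : rc (rrep u) ≤ rc (rrep w) := by rw [rc_rrep, rc_rrep]; exact huw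
      have hfin := (rc_le_iff (rrep u) (rrep w)).mp hle
      exact hh_trans (rrep u) (rrep w) hfin hx
    · intro v
      set x := rrep v with hx
      have hcomp : vᶜ = rc xᶜ := by rw [rc_compl, rc_rrep]
      have htop2 : (⊤ : B) ≤ hh x ⊔ hh xᶜ := by
        refine hatop.2 ?_
        rintro _ ⟨n, rfl⟩
        have hsplit : a n = (a n ⊓ x n) ⊔ (a n ⊓ (x n)ᶜ) := by
          rw [← inf_sup_left, sup_compl_eq_top, inf_top_eq]
        rw [hsplit]
        refine sup_le_sup ((hhLUB x).1 ⟨n, rfl⟩) ?_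
        have h5 := (hhLUB xᶜ).1 ⟨n, rfl⟩
        simpa [Pi.compl_apply] using h5
      have hmem : hh x ⊔ hh xᶜ ∈ U := uf_upward hU (uf_top hU) htop2
      rcases uf_sup hU hmem with h | h
      · left
        have hrv : rc x = v := rc_rrep v
        rw [← hrv]
        exact (memV x).mpr h
      · right
        rw [hcomp]
        exact (memV xᶜ).mpr h
  set yd : B → (ℕ → B) := fun d n => a n ⊓ d with hyd
  have hhyd : ∀ d : B, hh (yd d) = d := by
    intro d
    apply le_antisymm
    · apply (hhLUB (yd d)).2
      rintro _ ⟨n, rfl⟩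
      exact le_trans inf_le_right inf_le_right
    · have h1 : ⊤ ⊓ d ≤ hh (yd d) := by
        refine isLUB_inf_le hatop ?_
        rintro _ ⟨n, rfl⟩
        refine le_trans (le_inf inf_le_left le_rfl) ?_
        exact (hhLUB (yd d)).1 ⟨n, rfl⟩
      rwa [top_inf_eq] at h1
  set D' : Set (redPow B) := (fun d => rc (yd d)) '' D with hD'
  have hD'V : D' ⊆ V := by
    rintro _ ⟨d, hd, rfl⟩
    refine (memV (yd d)).mpr ?_
    rw [hhyd]
    exact hDU hd
  have hbase' : ∀ v ∈ V, ∃ d' ∈ D', d' ≤ v := by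
    intro v hv
    have hx : hh (rrep v) ∈ U := hv
    obtain ⟨d, hdD, hdle⟩ := hDbase _ hx
    refine ⟨rc (yd d), ⟨d, hdD, rfl⟩, ?_⟩
    have hvr : rc (rrep v) = v := rc_rrep v
    rw [← hvr]
    refine (rc_le_iff _ _).mpr ?_
    have hall : ∀ n, yd d n ≤ rrep v n := by
      intro n
      have h1 : a n ⊓ hh (rrep v) ≤ rrep v n := by
        rw [inf_comm]
        refine isLUB_inf_le (hhLUB (rrep v)) ?_
        rintro _ ⟨m, rfl⟩
        by_cases hmn : m = n
        · subst hmn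
          exact le_trans inf_le_left inf_le_right
        · have hbt : a m ⊓ a n = ⊥ := hdisj m n hmn
          calc (a m ⊓ rrep v m) ⊓ a n ≤ a m ⊓ a n := inf_le_inf_right _ inf_le_left
            _ = ⊥ := hbt
            _ ≤ _ := bot_le
      calc yd d n = a n ⊓ d := rfl
        _ ≤ a n ⊓ hh (rrep v) := inf_le_inf_left _ hdle
        _ ≤ rrep v n := h1
    have hempty : {n | ¬ yd d n ≤ rrep v n} = ∅ := by
      ext n
      simpa using hall n
    rw [hempty]
    exact Set.finite_empty
  exact ⟨Cardinal.mk D',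
    ⟨V, hVuf, uf_nonprincipal hVuf redpow_atomless, D', hD'V, hbase', rfl⟩,
    Cardinal.mk_image_le⟩

end Leq

end Stmt18Aux
/-- `𝔲 ≤ 𝔲(ωB/Fin)`; and if `B` is complete, atomless and c.c.c., then
`𝔲(ωB/Fin) = 𝔲(B)`. -/
theorem stmt18 (B : Type) [BooleanAlgebra B] [Nontrivial B] :
    uNum PomegaFin ≤ uNum (redPow B) ∧
      ((∀ S : Set B, ∃ a : B, IsLUB S a) → (∀ a : B, ¬ IsAtom a) → CCC B →
        uNum (redPow B) = uNum B) := by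
  classical
  haveI : Nontrivial (redPow B) :=
    nontrivial_of_ne _ _ (Stmt18Aux.redpow_nontrivial B)
  constructor
  · exact Stmt18Aux.uNum_le_uNum (Stmt18Aux.part1_core B)
      (Stmt18Aux.uSet_nonempty_of (redPow B) Stmt18Aux.redpow_atomless)
  · intro hsup hatom hccc
    apply le_antisymm
    · exact Stmt18Aux.uNum_le_uNum (Stmt18Aux.leq_core B hsup hatom hccc)
        (Stmt18Aux.uSet_nonempty_of B hatom)
    · exact Stmt18Aux.uNum_le_uNum (Stmt18Aux.geq_core B hsup hatom)
        (Stmt18Aux.uSet_nonempty_of (redPow B) Stmt18Aux.redpow_atomless)
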